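/- Let f = h + conj(g) with h(z) = z + ∑_{n≥2} aₙ zⁿ and g(z) = ∑_{n≥2} bₙ zⁿ analytic on the unit disk, and suppose |aₙ| + |bₙ| ≤ n for all n ≥ 2 (the stable-univalent coefficient bound) and d(f(0), ∂f(𝔻)) ≥ 1/4. Fix integers m, p ≥ 1 and let r ∈ [0,1) satisfy r^m + r^p + r^{2m}(4 - 3r^m + r^{2m})/(1 - r^m)³ + (2r^{2p} - r^{3p})/(1 - r^p)² ≤ 1/4. Then for any z with |z| = r and any ωₘ, ω_p with |ωₘ(z)| ≤ |z|^m, |ω_p(z)| ≤ |z|^p: |ωₘ(z)| + ∑_{n≥2} n(|aₙ|+|bₙ|)|ωₘ(z)|ⁿ + |ω_p(z)| + ∑_{n≥2}(|aₙ|+|bₙ|)|ω_p(z)|ⁿ ≤ 1/4. -/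

import Mathlib

open ComplexConjugate

lemma aux_hasSum_lin {x : ℝ} (h0 : 0 ≤ x) (h1 : x < 1) :
    HasSum (fun n : ℕ ↦ ((n : ℝ) + 2) * x ^ (n + 2)) ((2 * x ^ 2 - x ^ 3) / (1 - x) ^ 2) := by
  have hx : ‖x‖ < 1 := by rw [Real.norm_eq_abs, abs_lt]; constructor <;> linarith
  have B := hasSum_choose_mul_geometric_of_norm_lt_one (𝕜 := ℝ) 1 hx
  have C := hasSum_geometric_of_norm_lt_one hx
  have D := (B.add C).mul_left (x ^ 2)
  have hne : (1 - x) ≠ 0 := by linarith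
  convert D using 1
  · rfl
  · funext n
    rw [Nat.choose_one_right]
    push_cast
    ring
  · rw [inv_eq_one_div]
    field_simp
    ring

lemma aux_hasSum_sq {x : ℝ} (h0 : 0 ≤ x) (h1 : x < 1) :
    HasSum (fun n : ℕ ↦ ((n : ℝ) + 2) ^ 2 * x ^ (n + 2))
      (x ^ 2 * (4 - 3 * x + x ^ 2) / (1 - x) ^ 3) := by
  have hx : ‖x‖ < 1 := by rw [Real.norm_eq_abs, abs_lt]; constructor <;> linarith
  have A := hasSum_choose_mul_geometric_of_norm_lt_one (𝕜 := ℝ) 2 hx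
  have B := hasSum_choose_mul_geometric_of_norm_lt_one (𝕜 := ℝ) 1 hx
  have C := hasSum_geometric_of_norm_lt_one hx
  have D := (((A.mul_left 2).add B).add C).mul_left (x ^ 2)
  have hne : (1 - x) ≠ 0 := by linarith
  convert D using 1
  · rfl
  · funext n
    rw [Nat.cast_choose_two, Nat.choose_one_right]
    push_cast
    ring
  · rw [inv_eq_one_div]
    field_simp
    ring

theorem stmt_14 (a b : ℕ → ℂ) (h g f : ℂ → ℂ)
    (hh : ∀ z ∈ Metric.ball (0 : ℂ) 1, h z = z + ∑' n : ℕ, a (n + 2) * z ^ (n + 2))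
    (hg : ∀ z ∈ Metric.ball (0 : ℂ) 1, g z = ∑' n : ℕ, b (n + 2) * z ^ (n + 2))
    (hf : ∀ z, f z = h z + conj (g z))
    (hcoef : ∀ n : ℕ, 2 ≤ n → ‖a n‖ + ‖b n‖ ≤ (n : ℝ))
    (hd : (1 : ℝ) / 4 ≤ Metric.infDist (f 0) (frontier (f '' Metric.ball (0 : ℂ) 1)))
    (m p : ℕ) (hm : 1 ≤ m) (hp : 1 ≤ p) (r : ℝ) (hr0 : 0 ≤ r) (hr1 : r < 1)
    (hrle : r ^ m + r ^ p
        + r ^ (2 * m) * (4 - 3 * r ^ m + r ^ (2 * m)) / (1 - r ^ m) ^ 3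
        + (2 * r ^ (2 * p) - r ^ (3 * p)) / (1 - r ^ p) ^ 2 ≤ 1 / 4) :
    ∀ z : ℂ, ‖z‖ = r → ∀ ωm ωp : ℂ → ℂ,
      ‖ωm z‖ ≤ ‖z‖ ^ m → ‖ωp z‖ ≤ ‖z‖ ^ p →
      ‖ωm z‖ + (∑' n : ℕ, ((n + 2 : ℝ)) * (‖a (n + 2)‖ + ‖b (n + 2)‖) * ‖ωm z‖ ^ (n + 2))
        + ‖ωp z‖ + (∑' n : ℕ, (‖a (n + 2)‖ + ‖b (n + 2)‖) * ‖ωp z‖ ^ (n + 2)) ≤ 1 / 4 := by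
  intro z hz ωm ωp hωm hωp
  rw [hz] at hωm hωp
  set s := ‖ωm z‖ with hs
  set t := ‖ωp z‖ with ht
  have hs0 : 0 ≤ s := norm_nonneg _
  have ht0 : 0 ≤ t := norm_nonneg _
  have hx0 : 0 ≤ r ^ m := pow_nonneg hr0 m
  have hy0 : 0 ≤ r ^ p := pow_nonneg hr0 p
  have hx1 : r ^ m < 1 := pow_lt_one₀ hr0 hr1 (by omega)
  have hy1 : r ^ p < 1 := pow_lt_one₀ hr0 hr1 (by omega)
  have Hsq := aux_hasSum_sq hx0 hx1
  have Hlin := aux_hasSum_lin hy0 hy1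
  -- coefficient bound
  have hab : ∀ n : ℕ, ‖a (n + 2)‖ + ‖b (n + 2)‖ ≤ (n : ℝ) + 2 := by
    intro n
    have := hcoef (n + 2) (by omega)
    push_cast at this
    exact this
  -- termwise bounds
  have hterm1 : ∀ n : ℕ, ((n : ℝ) + 2) * (‖a (n + 2)‖ + ‖b (n + 2)‖) * s ^ (n + 2)
      ≤ ((n : ℝ) + 2) ^ 2 * (r ^ m) ^ (n + 2) := by
    intro n
    have h1 : ((n : ℝ) + 2) * (‖a (n + 2)‖ + ‖b (n + 2)‖) ≤ ((n : ℝ) + 2) ^ 2 := by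
      have := hab n
      nlinarith [norm_nonneg (a (n + 2)), norm_nonneg (b (n + 2))]
    have h2 : s ^ (n + 2) ≤ (r ^ m) ^ (n + 2) := pow_le_pow_left₀ hs0 hωm _
    have h3 : 0 ≤ ((n : ℝ) + 2) * (‖a (n + 2)‖ + ‖b (n + 2)‖) := by
      positivity
    calc ((n : ℝ) + 2) * (‖a (n + 2)‖ + ‖b (n + 2)‖) * s ^ (n + 2)
        ≤ ((n : ℝ) + 2) * (‖a (n + 2)‖ + ‖b (n + 2)‖) * (r ^ m) ^ (n + 2) := by
          exact mul_le_mul_of_nonneg_left h2 h3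
      _ ≤ ((n : ℝ) + 2) ^ 2 * (r ^ m) ^ (n + 2) := by
          exact mul_le_mul_of_nonneg_right h1 (by positivity)
  have hterm2 : ∀ n : ℕ, (‖a (n + 2)‖ + ‖b (n + 2)‖) * t ^ (n + 2)
      ≤ ((n : ℝ) + 2) * (r ^ p) ^ (n + 2) := by
    intro n
    have h2 : t ^ (n + 2) ≤ (r ^ p) ^ (n + 2) := pow_le_pow_left₀ ht0 hωp _
    calc (‖a (n + 2)‖ + ‖b (n + 2)‖) * t ^ (n + 2)
        ≤ (‖a (n + 2)‖ + ‖b (n + 2)‖) * (r ^ p) ^ (n + 2) := by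
          exact mul_le_mul_of_nonneg_left h2 (by positivity)
      _ ≤ ((n : ℝ) + 2) * (r ^ p) ^ (n + 2) :=
          mul_le_mul_of_nonneg_right (hab n) (by positivity)
  -- summability of LHS series
  have hsum1 : Summable (fun n : ℕ ↦ ((n : ℝ) + 2) * (‖a (n + 2)‖ + ‖b (n + 2)‖) * s ^ (n + 2)) :=
    Summable.of_nonneg_of_le (fun n ↦ by positivity) hterm1 Hsq.summable
  have hsum2 : Summable (fun n : ℕ ↦ (‖a (n + 2)‖ + ‖b (n + 2)‖) * t ^ (n + 2)) :=
    Summable.of_nonneg_of_le (fun n ↦ by positivity) hterm2 Hlin.summable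
  have hT1 : (∑' n : ℕ, ((n : ℝ) + 2) * (‖a (n + 2)‖ + ‖b (n + 2)‖) * s ^ (n + 2))
      ≤ (r ^ m) ^ 2 * (4 - 3 * r ^ m + (r ^ m) ^ 2) / (1 - r ^ m) ^ 3 := by
    rw [← Hsq.tsum_eq]
    exact Summable.tsum_le_tsum hterm1 hsum1 Hsq.summable
  have hT2 : (∑' n : ℕ, (‖a (n + 2)‖ + ‖b (n + 2)‖) * t ^ (n + 2))
      ≤ (2 * (r ^ p) ^ 2 - (r ^ p) ^ 3) / (1 - r ^ p) ^ 2 := by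
    rw [← Hlin.tsum_eq]
    exact Summable.tsum_le_tsum hterm2 hsum2 Hlin.summable
  have e1 : r ^ (2 * m) = (r ^ m) ^ 2 := by rw [mul_comm, pow_mul]
  have e2 : r ^ (2 * p) = (r ^ p) ^ 2 := by rw [mul_comm, pow_mul]
  have e3 : r ^ (3 * p) = (r ^ p) ^ 3 := by rw [mul_comm, pow_mul]
  rw [e1, e2, e3] at hrle
  linarith [hT1, hT2, hωm, hωp]
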